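/- Let w ∈ ℝ^d with d even, let R be a uniformly random subset of {1,...,d} of size d/2, and define X = 2∑_{i∈R} w_i² - ‖w‖². Then E[X²] ≤ 2‖w‖₄⁴, where ‖w‖₄⁴ = ∑_i w_i⁴. -/

import Mathlib

open Finset


lemma choose_bound (m : ℕ) : 4 * Nat.choose (2*m+2) m ≤ Nat.choose (2*m+4) (m+2) := by
  have h1 := Nat.add_one_mul_choose_eq (2*m+3) (m+1)
  have h2 := Nat.add_one_mul_choose_eq (2*m+2) m
  rw [show 2*m+3+1 = 2*m+4 by omega, show m+1+1 = m+2 by omega] at h1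
  rw [show 2*m+2+1 = 2*m+3 by omega] at h2
  -- h1 : (2*m+4) * choose (2*m+3) (m+1) = choose (2*m+4) (m+2) * (m+2)
  -- h2 : (2*m+3) * choose (2*m+2) m = choose (2*m+3) (m+1) * (m+1)
  have key : Nat.choose (2*m+4) (m+2) * (m+1) = 2 * (2*m+3) * Nat.choose (2*m+2) m := by
    have h3 : (m+2) * (Nat.choose (2*m+4) (m+2) * (m+1))
        = (m+2) * (2 * (2*m+3) * Nat.choose (2*m+2) m) := by
      calc (m+2) * (Nat.choose (2*m+4) (m+2) * (m+1))
          = ((2*m+4) * Nat.choose (2*m+3) (m+1)) * (m+1) := by rw [h1]; ring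
        _ = (2*m+4) * (Nat.choose (2*m+3) (m+1) * (m+1)) := by ring
        _ = (2*m+4) * ((2*m+3) * Nat.choose (2*m+2) m) := by rw [h2]
        _ = (m+2) * (2 * (2*m+3) * Nat.choose (2*m+2) m) := by ring
    exact Nat.eq_of_mul_eq_mul_left (by omega) h3
  have h5 : 4 * Nat.choose (2*m+2) m * (m+1) ≤ Nat.choose (2*m+4) (m+2) * (m+1) := by
    rw [key]; nlinarith [Nat.zero_le (Nat.choose (2*m+2) m)]
  exact Nat.le_of_mul_le_mul_right h5 (by omega)


lemma half_card (d k : ℕ) (hk : d = k + k) (i : Fin d) :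
    2 * ((powersetCard k (univ : Finset (Fin d))).filter (fun S => i ∈ S)).card
      = (powersetCard k (univ : Finset (Fin d))).card := by
  have hbij : (((powersetCard k (univ : Finset (Fin d))).filter (fun S => i ∈ S))).card
      = (((powersetCard k (univ : Finset (Fin d))).filter (fun S => ¬ i ∈ S))).card := by
    apply Finset.card_nbij' (fun S => Sᶜ) (fun S => Sᶜ)
    · intro S hS
      simp only [Finset.mem_coe, mem_filter, mem_powersetCard_univ] at hS ⊢
      refine ⟨by rw [Finset.card_compl, hS.1, Fintype.card_fin]; omega, by simp [hS.2]⟩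
    · intro S hS
      simp only [Finset.mem_coe, mem_filter, mem_powersetCard_univ] at hS ⊢
      refine ⟨by rw [Finset.card_compl, hS.1, Fintype.card_fin]; omega, by simp [hS.2]⟩
    · intro S _; simp
    · intro S _; simp
  have := Finset.card_filter_add_card_filter_not (s := powersetCard k (univ : Finset (Fin d))) (p := fun S => i ∈ S)
  omega

lemma pair_card (d k : ℕ) (hk : d = k + k) (hk2 : 2 ≤ k) (i j : Fin d) (hij : i ≠ j) :
    ((powersetCard k (univ : Finset (Fin d))).filter (fun S => i ∈ S ∧ j ∈ S)).card
      = Nat.choose (d - 2) (k - 2) := by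
  have hcard : (((univ : Finset (Fin d)).erase i).erase j).card = d - 2 := by
    rw [Finset.card_erase_of_mem (by simp [hij.symm]), Finset.card_erase_of_mem (by simp)]
    simp; omega
  have h : ((powersetCard k (univ : Finset (Fin d))).filter (fun S => i ∈ S ∧ j ∈ S)).card
      = (powersetCard (k - 2) (((univ : Finset (Fin d)).erase i).erase j)).card := by
    apply Finset.card_nbij' (fun S => (S.erase i).erase j) (fun T => insert i (insert j T))
    · intro S hS
      simp only [Finset.mem_coe, mem_filter, mem_powersetCard_univ] at hS
      obtain ⟨hSc, hiS, hjS⟩ := hS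
      simp only [Finset.mem_coe, mem_powersetCard]
      refine ⟨?_, ?_⟩
      · intro x hx
        simp only [mem_erase] at hx ⊢
        exact ⟨hx.1, hx.2.1, mem_univ x⟩
      · rw [Finset.card_erase_of_mem (Finset.mem_erase.mpr ⟨hij.symm, hjS⟩),
          Finset.card_erase_of_mem hiS, hSc]
        omega
    · intro T hT
      rw [Finset.mem_coe, mem_powersetCard] at hT
      obtain ⟨hTsub, hTc⟩ := hT
      have hiT : i ∉ T := fun h => by simpa using (hTsub h)
      have hjT : j ∉ T := fun h => by simpa [hij.symm] using (hTsub h)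
      have hins : i ∉ insert j T := by simp [hiT, hij]
      simp only [Finset.mem_coe, mem_filter, mem_powersetCard_univ]
      refine ⟨?_, by simp, by simp⟩
      rw [Finset.card_insert_of_notMem hins, Finset.card_insert_of_notMem hjT, hTc]
      omega
    · intro S hS
      simp only [Finset.mem_coe, mem_filter, mem_powersetCard_univ] at hS
      obtain ⟨hSc, hiS, hjS⟩ := hS
      dsimp only
      rw [Finset.insert_erase (Finset.mem_erase.mpr ⟨hij.symm, hjS⟩)]
      exact Finset.insert_erase hiS
    · intro T hT
      rw [Finset.mem_coe, mem_powersetCard] at hT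
      have hiT : i ∉ T := fun h => by simpa using (hT.1 h)
      have hjT : j ∉ T := fun h => by simpa [hij.symm] using (hT.1 h)
      have hins : i ∉ insert j T := by simp [hiT, hij]
      dsimp only
      rw [Finset.erase_insert hins, Finset.erase_insert hjT]
  rw [h, Finset.card_powersetCard, hcard]


private theorem main_ineq (d k : ℕ) (hk : d = k + k) (hk1 : 1 ≤ k) (w : Fin d → ℝ)
    (half_card : ∀ i : Fin d, 2 * ((powersetCard k (univ : Finset (Fin d))).filter (fun S => i ∈ S)).card
      = (powersetCard k (univ : Finset (Fin d))).card)
    (pair_bound : ∀ i j : Fin d, i ≠ j →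
      4 * ((powersetCard k (univ : Finset (Fin d))).filter (fun S => i ∈ S ∧ j ∈ S)).card
        ≤ (powersetCard k (univ : Finset (Fin d))).card) :
    (∑ S ∈ Finset.powersetCard k (Finset.univ : Finset (Fin d)),
        (2 * ∑ i ∈ S, (w i) ^ 2 - ∑ i, (w i) ^ 2) ^ 2)
      ≤ 2 * (∑ i, (w i) ^ 4) * (Finset.powersetCard k (Finset.univ : Finset (Fin d))).card := by
  classical
  set P := Finset.powersetCard k (Finset.univ : Finset (Fin d)) with hPdef
  set a : Fin d → ℝ := fun i => w i ^ 2 with ha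
  set e : Finset (Fin d) → Fin d → ℝ := fun S i => if i ∈ S then 1 else -1 with he
  set E : Fin d → Fin d → ℝ := fun i j => ∑ S ∈ P, e S i * e S j with hE
  have step1 : ∀ S, 2 * ∑ i ∈ S, w i ^ 2 - ∑ i, w i ^ 2 = ∑ i, a i * e S i := by
    intro S
    have h1 : ∀ i, a i * e S i = 2 * (if i ∈ S then w i ^ 2 else 0) - w i ^ 2 := by
      intro i; by_cases h : i ∈ S <;> simp [ha, he, h] <;> ring
    rw [Finset.sum_congr rfl (fun i _ => h1 i), Finset.sum_sub_distrib, ← Finset.mul_sum,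
      Finset.sum_ite_mem, Finset.univ_inter]
  have step2 : (∑ S ∈ P, (2 * ∑ i ∈ S, (w i) ^ 2 - ∑ i, (w i) ^ 2) ^ 2)
      = ∑ i, ∑ j, a i * a j * E i j := by
    calc (∑ S ∈ P, (2 * ∑ i ∈ S, (w i) ^ 2 - ∑ i, (w i) ^ 2) ^ 2)
        = ∑ S ∈ P, ∑ i, ∑ j, (a i * e S i) * (a j * e S j) := by
          refine Finset.sum_congr rfl fun S _ => ?_
          rw [step1 S, sq, Finset.sum_mul_sum]
      _ = ∑ i, ∑ j, ∑ S ∈ P, (a i * e S i) * (a j * e S j) := by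
          rw [Finset.sum_comm]
          exact Finset.sum_congr rfl fun i _ => Finset.sum_comm
      _ = ∑ i, ∑ j, a i * a j * E i j := by
          refine Finset.sum_congr rfl fun i _ => Finset.sum_congr rfl fun j _ => ?_
          simp only [hE]
          rw [Finset.mul_sum]
          exact Finset.sum_congr rfl fun S _ => by ring
  have hEdiag : ∀ i, E i i = P.card := by
    intro i
    simp only [hE]
    have : ∀ S, e S i * e S i = 1 := by
      intro S; by_cases h : i ∈ S <;> simp [he, h]
    simp only [this, Finset.sum_const, nsmul_eq_mul, mul_one]
  have hEoff : ∀ i j : Fin d, i ≠ j → E i j ≤ 0 := by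
    intro i j hij
    have expand : ∀ S, e S i * e S j
        = 4 * (if i ∈ S ∧ j ∈ S then (1:ℝ) else 0)
          - 2 * (if i ∈ S then (1:ℝ) else 0) - 2 * (if j ∈ S then (1:ℝ) else 0) + 1 := by
      intro S
      by_cases h1 : i ∈ S <;> by_cases h2 : j ∈ S <;> simp [he, h1, h2] <;> ring
    simp only [hE]
    rw [Finset.sum_congr rfl (fun S _ => expand S)]
    rw [Finset.sum_add_distrib, Finset.sum_sub_distrib, Finset.sum_sub_distrib,
      ← Finset.mul_sum, ← Finset.mul_sum, ← Finset.mul_sum,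
      Finset.sum_boole, Finset.sum_boole, Finset.sum_boole, Finset.sum_const, nsmul_eq_mul, mul_one]
    have hci := half_card i
    have hcj := half_card j
    have hpb := pair_bound i j hij
    have hciR : 2 * ((P.filter (fun S => i ∈ S)).card : ℝ) = (P.card : ℝ) := by exact_mod_cast hci
    have hcjR : 2 * ((P.filter (fun S => j ∈ S)).card : ℝ) = (P.card : ℝ) := by exact_mod_cast hcj
    have hpbR : 4 * ((P.filter (fun S => i ∈ S ∧ j ∈ S)).card : ℝ) ≤ (P.card : ℝ) := by
      exact_mod_cast hpb
    linarith
  rw [step2]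
  have hrow : ∀ i, ∑ j, a i * a j * E i j ≤ a i * a i * P.card := by
    intro i
    rw [← Finset.add_sum_erase _ _ (Finset.mem_univ i)]
    have h0 : ∑ j ∈ Finset.univ.erase i, a i * a j * E i j ≤ 0 := by
      refine Finset.sum_nonpos fun j hj => ?_
      have hji : j ≠ i := (Finset.mem_erase.mp hj).1
      exact mul_nonpos_of_nonneg_of_nonpos
        (mul_nonneg (sq_nonneg _) (sq_nonneg _)) (hEoff i j hji.symm)
    calc a i * a i * E i i + ∑ j ∈ Finset.univ.erase i, a i * a j * E i j
        ≤ a i * a i * E i i + 0 := by linarith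
      _ = a i * a i * P.card := by rw [hEdiag i, add_zero]
  calc ∑ i, ∑ j, a i * a j * E i j ≤ ∑ i, a i * a i * (P.card : ℝ) :=
        Finset.sum_le_sum fun i _ => hrow i
    _ = (∑ i, w i ^ 4) * P.card := by
        rw [← Finset.sum_mul]
        congr 1
        exact Finset.sum_congr rfl fun i _ => by rw [ha]; ring
    _ ≤ 2 * (∑ i, w i ^ 4) * P.card := by
        have h1 : (0:ℝ) ≤ ∑ i, w i ^ 4 :=
          Finset.sum_nonneg fun i _ => by positivity
        have h2 : (0:ℝ) ≤ (P.card : ℝ) := Nat.cast_nonneg _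
        nlinarith

/-- For `w ∈ ℝ^d` (`d` even), `R` a uniformly random subset of size `d/2`, and
`X = 2 ∑_{i∈R} w_i² - ‖w‖²`, one has `E[X²] ≤ 2 ‖w‖₄⁴`. -/
theorem expectation_sq_random_half_subset (d : ℕ) (hd : Even d) (hd0 : 0 < d)
    (w : Fin d → ℝ) :
    (∑ S ∈ Finset.powersetCard (d / 2) (Finset.univ : Finset (Fin d)),
        (2 * ∑ i ∈ S, (w i) ^ 2 - ∑ i, (w i) ^ 2) ^ 2) /
      (Finset.powersetCard (d / 2) (Finset.univ : Finset (Fin d))).card ≤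
    2 * ∑ i, (w i) ^ 4 := by
  obtain ⟨k, hk⟩ := hd
  have hdk : d / 2 = k := by omega
  rw [hdk]
  have hN : 0 < (Finset.powersetCard k (Finset.univ : Finset (Fin d))).card := by
    rw [Finset.card_powersetCard, Finset.card_univ, Fintype.card_fin]
    exact Nat.choose_pos (by omega)
  rw [div_le_iff₀ (by exact_mod_cast hN)]
  have pair_bound : ∀ i j : Fin d, i ≠ j →
      4 * ((powersetCard k (univ : Finset (Fin d))).filter (fun S => i ∈ S ∧ j ∈ S)).card
        ≤ (powersetCard k (univ : Finset (Fin d))).card := by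
    intro i j hij
    by_cases hk2 : 2 ≤ k
    · rw [pair_card d k hk hk2 i j hij, Finset.card_powersetCard, Finset.card_univ,
        Fintype.card_fin]
      obtain ⟨m, rfl⟩ : ∃ m, k = m + 2 := ⟨k - 2, by omega⟩
      have hd2 : d = 2 * m + 4 := by omega
      subst hd2
      rw [show 2 * m + 4 - 2 = 2 * m + 2 by omega, show m + 2 - 2 = m by omega]
      exact choose_bound m
    · have hempty : (powersetCard k (univ : Finset (Fin d))).filter
          (fun S => i ∈ S ∧ j ∈ S) = ∅ := by
        rw [Finset.filter_eq_empty_iff]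
        rintro S hS ⟨hi, hj⟩
        have hsub : ({i, j} : Finset (Fin d)) ⊆ S := by
          intro x hx
          simp only [Finset.mem_insert, Finset.mem_singleton] at hx
          rcases hx with rfl | rfl
          · exact hi
          · exact hj
        have h2 : ({i, j} : Finset (Fin d)).card = 2 := Finset.card_pair hij
        have := Finset.card_le_card hsub
        rw [h2, (Finset.mem_powersetCard_univ.mp hS)] at this
        omega
      rw [hempty]
      simp
  exact main_ineq d k hk (by omega) w (fun i => half_card d k hk i) pair_bound
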